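/- Let (X,Y) be a difference family with parameters (v; k₁, k₂; λ) in an abelian group G of odd order v > 1, where λ = k₁ + k₂ − (v+1)/2. Then each of k₁ and k₂ belongs to the set {(v−1)/2, (v+1)/2}. -/

import Mathlib

open Finset

lemma sum_counts_aux {G : Type*} [AddCommGroup G] [Fintype G] [DecidableEq G]
    (X : Finset G) :
    X.card * X.card = X.card +
      ∑ s ∈ univ.erase (0:G), ((X ×ˢ X).filter (fun p => p.1 - p.2 = s)).card := by
  have h1 : (X ×ˢ X).card
      = ∑ s : G, ((X ×ˢ X).filter (fun p => p.1 - p.2 = s)).card :=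
    Finset.card_eq_sum_card_fiberwise (fun p _ => mem_univ _)
  have h0 : ((X ×ˢ X).filter (fun p => p.1 - p.2 = 0)).card = X.card := by
    have heq : (X ×ˢ X).filter (fun p => p.1 - p.2 = 0)
        = X.image (fun x => (x, x)) := by
      ext ⟨a, b⟩
      simp only [mem_filter, mem_product, mem_image, sub_eq_zero, Prod.mk.injEq]
      constructor
      · rintro ⟨⟨ha, hb⟩, hab⟩; exact ⟨a, ha, rfl, hab⟩
      · rintro ⟨x, hx, rfl, rfl⟩; exact ⟨⟨hx, hx⟩, rfl⟩
    rw [heq, Finset.card_image_of_injective]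
    intro a b h
    simpa using h
  have h2 : ((X ×ˢ X).filter (fun p => p.1 - p.2 = (0:G))).card
      + ∑ s ∈ univ.erase (0:G), ((X ×ˢ X).filter (fun p => p.1 - p.2 = s)).card
      = ∑ s : G, ((X ×ˢ X).filter (fun p => p.1 - p.2 = s)).card :=
    Finset.add_sum_erase univ
      (fun s => ((X ×ˢ X).filter (fun p => p.1 - p.2 = s)).card) (mem_univ (0:G))
  rw [h0] at h2
  calc X.card * X.card = (X ×ˢ X).card := (Finset.card_product X X).symm
    _ = ∑ s : G, ((X ×ˢ X).filter (fun p => p.1 - p.2 = s)).card := h1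
    _ = _ := h2.symm

/-- Let `(X,Y)` be a difference family with parameters
`(v; k₁, k₂; λ)` in an abelian group `G` of odd order `v > 1`, where
`λ = k₁ + k₂ - (v+1)/2`. Then each of `k₁` and `k₂` belongs to
`{(v-1)/2, (v+1)/2}`. -/
theorem legendre_df_block_sizes
    {G : Type*} [AddCommGroup G] [Fintype G] [DecidableEq G]
    (v : ℕ) (hv : Fintype.card G = v) (hv1 : 1 < v) (hvodd : Odd v)
    (X Y : Finset G) (k₁ k₂ lam : ℕ)
    (hk₁ : X.card = k₁) (hk₂ : Y.card = k₂)
    (hlam : (lam : ℤ) = k₁ + k₂ - (v + 1) / 2)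
    (hDF : ∀ s : G, s ≠ 0 →
        ((X ×ˢ X).filter (fun p => p.1 - p.2 = s)).card
          + ((Y ×ˢ Y).filter (fun p => p.1 - p.2 = s)).card = lam) :
    (k₁ = (v - 1) / 2 ∨ k₁ = (v + 1) / 2) ∧
    (k₂ = (v - 1) / 2 ∨ k₂ = (v + 1) / 2) := by
  obtain ⟨m, hm⟩ := hvodd
  have hX := sum_counts_aux X
  have hY := sum_counts_aux Y
  have hsum : ∑ s ∈ univ.erase (0:G),
      (((X ×ˢ X).filter (fun p => p.1 - p.2 = s)).card
        + ((Y ×ˢ Y).filter (fun p => p.1 - p.2 = s)).card)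
      = (v - 1) * lam := by
    rw [Finset.sum_congr rfl (fun s hs => hDF s (Finset.mem_erase.mp hs).1),
      Finset.sum_const, Finset.card_erase_of_mem (mem_univ _),
      Finset.card_univ, hv, smul_eq_mul]
  rw [Finset.sum_add_distrib] at hsum
  have key : k₁ * k₁ + k₂ * k₂ = k₁ + k₂ + 2 * m * lam := by
    rw [← hk₁, ← hk₂, hX, hY]
    have h2m : v - 1 = 2 * m := by omega
    rw [h2m] at hsum
    omega
  have hkeyZ : (k₁ : ℤ) * k₁ + (k₂ : ℤ) * k₂ = k₁ + k₂ + 2 * m * lam := by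
    exact_mod_cast key
  clear hX hY hsum hDF hk₁ hk₂ hv key
  clear X Y
  have hmZ : (v : ℤ) = 2 * m + 1 := by exact_mod_cast hm
  have hvZ : ((v : ℤ) + 1) / 2 = m + 1 := by omega
  have hlam' : (lam : ℤ) = (k₁ : ℤ) + k₂ - ((m : ℤ) + 1) := by
    rw [hlam, hvZ]
  have hab : (2 * (k₁:ℤ) - (2 * m + 1))^2 + (2 * (k₂:ℤ) - (2 * m + 1))^2 = 2 := by
    linear_combination 4 * hkeyZ + 8 * (m:ℤ) * hlam'
  set a : ℤ := 2 * (k₁:ℤ) - (2 * m + 1) with ha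
  set b : ℤ := 2 * (k₂:ℤ) - (2 * m + 1) with hb
  clear_value a b
  have hA : -2 < a ∧ a < 2 := by
    constructor
    · nlinarith [sq_nonneg (a + 2), sq_nonneg b]
    · nlinarith [sq_nonneg (a - 2), sq_nonneg b]
  have hB : -2 < b ∧ b < 2 := by
    constructor
    · nlinarith [sq_nonneg (b + 2), sq_nonneg a]
    · nlinarith [sq_nonneg (b - 2), sq_nonneg a]
  obtain ⟨hA1, hA2⟩ := hA
  obtain ⟨hB1, hB2⟩ := hB
  have hcases : (a = 1 ∨ a = -1) ∧ (b = 1 ∨ b = -1) := by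
    interval_cases a <;> interval_cases b <;> revert hab <;> norm_num
  obtain ⟨hc1, hc2⟩ := hcases
  constructor
  · rcases hc1 with h | h <;> omega
  · rcases hc2 with h | h <;> omega
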